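/- There exists a universal constant C' > 0 with the following property. Let f^{(1)}, …, f^{(m)} ∈ ℝ^n be the frequency vectors of an insertion-only stream, let Z̄_1, …, Z̄_n be i.i.d. Rademacher random variables, and define Y_t = ∑_{j=1}^n Z̄_j f_j^{(t)} for t ∈ [m]. Then E[ sup_{t ∈ [m]} |Y_t| ] ≤ C' · ‖f^{(m)}‖₂. -/

import Mathlib

open MeasureTheory ProbabilityTheory
open scoped ENNReal

/-- The Euclidean (ℓ₂) norm of a vector in ℝ^k. -/
noncomputable def l2norm {k : ℕ} (x : Fin k → ℝ) : ℝ := Real.sqrt (∑ i, (x i) ^ 2)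

/-- The frequency vector at time `t` of the insertion-only stream `p` over universe `[n]`. -/
noncomputable def freq {n m : ℕ} (p : Fin m → Fin n) (t : ℕ) : Fin n → ℝ :=
  fun j => ((Finset.univ.filter fun t' : Fin m => (t' : ℕ) < t ∧ p t' = j).card : ℝ)

/-- The law of a Rademacher random variable: uniform on `{-1, +1}`. -/
noncomputable def radMeasure : Measure ℝ :=
  (2⁻¹ : ℝ≥0∞) • Measure.dirac (1 : ℝ) + (2⁻¹ : ℝ≥0∞) • Measure.dirac (-1 : ℝ)

set_option linter.unusedSectionVars false

section Aux

open Finset Real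

/-! ### Integrals against `radMeasure` -/

lemma integrable_dirac_aux {g : ℝ → ℝ} (hg : Measurable g) (a : ℝ) :
    Integrable g (Measure.dirac a) := by
  refine ⟨hg.aestronglyMeasurable, ?_⟩
  rw [hasFiniteIntegral_def, lintegral_dirac' _ (by measurability)]
  exact ENNReal.coe_lt_top

lemma rad_integral {g : ℝ → ℝ} (hg : Measurable g) :
    ∫ x, g x ∂radMeasure = (g 1 + g (-1)) / 2 := by
  rw [radMeasure, integral_add_measure
      (((integrable_dirac_aux hg 1).smul_measure (by norm_num)))
      (((integrable_dirac_aux hg (-1)).smul_measure (by norm_num))),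
    integral_smul_measure, integral_smul_measure, integral_dirac, integral_dirac]
  norm_num
  ring

lemma radMeasure_isProb : IsProbabilityMeasure radMeasure := by
  constructor
  rw [radMeasure]
  simp [Measure.dirac_apply_of_mem]
  rw [ENNReal.inv_two_add_inv_two]

/-! ### Variables -/

variable {n : ℕ} {Ω : Type} [MeasurableSpace Ω] {μ : Measure Ω} [IsProbabilityMeasure μ]
  {Z : Fin n → Ω → ℝ}

lemma G_meas (hmeas : ∀ i, Measurable (Z i)) (a : Fin n → ℝ) :
    Measurable (fun ω => ∑ j, Z j ω * a j) :=
  Finset.measurable_sum _ (fun j _ => (hmeas j).mul_const _)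

lemma Z_ae_bound (hmeas : ∀ i, Measurable (Z i))
    (hlaw : ∀ i, Measure.map (Z i) μ = radMeasure) :
    ∀ᵐ ω ∂μ, ∀ j, |Z j ω| ≤ 1 := by
  rw [ae_all_iff]
  intro j
  have hS : MeasurableSet {x : ℝ | |x| ≤ 1} := by
    have : {x : ℝ | |x| ≤ 1} = Set.Icc (-1) 1 := by ext x; simp [abs_le]
    rw [this]; exact measurableSet_Icc
  have hmap : μ ((Z j) ⁻¹' {x : ℝ | |x| ≤ 1}ᶜ) = radMeasure {x : ℝ | |x| ≤ 1}ᶜ := by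
    rw [← hlaw j, Measure.map_apply (hmeas j) hS.compl]
  have hrad : radMeasure {x : ℝ | |x| ≤ 1}ᶜ = 0 := by
    rw [radMeasure]
    have h1 : (1:ℝ) ∉ {x : ℝ | |x| ≤ 1}ᶜ := by simp
    have h2 : (-1:ℝ) ∉ {x : ℝ | |x| ≤ 1}ᶜ := by simp
    simp [Measure.dirac_apply' _ hS.compl, Set.indicator_of_notMem h1,
      Set.indicator_of_notMem h2]
  have : μ {ω | ¬ |Z j ω| ≤ 1} = 0 := by
    have : {ω | ¬ |Z j ω| ≤ 1} = (Z j) ⁻¹' {x : ℝ | |x| ≤ 1}ᶜ := by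
      ext ω; simp
    rw [this, hmap, hrad]
  exact this

/-- Sub-Gaussian mgf bound for Rademacher linear combinations. -/
lemma mgf_bound (hmeas : ∀ i, Measurable (Z i))
    (hindep : iIndepFun Z μ)
    (hlaw : ∀ i, Measure.map (Z i) μ = radMeasure)
    (a : Fin n → ℝ) (l : ℝ) :
    ∫ ω, Real.exp (l * ∑ j, Z j ω * a j) ∂μ ≤ Real.exp (l^2 * (∑ j, (a j)^2) / 2) := by
  set W : Fin n → Ω → ℝ := fun j ω => Z j ω * a j with hW
  have hWmeas : ∀ j, Measurable (W j) := fun j => (hmeas j).mul_const _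
  have hWindep : iIndepFun W μ :=
    hindep.comp (fun j x => x * a j) (fun j => measurable_mul_const _)
  have h1 : (fun ω => Real.exp (l * ∑ j, Z j ω * a j))
      = fun ω => Real.exp (l * (∑ j, W j) ω) := by
    funext ω; rw [Finset.sum_apply]
  rw [h1]
  have h2 : ∫ ω, Real.exp (l * (∑ j, W j) ω) ∂μ = mgf (∑ j, W j) μ l := rfl
  rw [h2, hWindep.mgf_sum hWmeas]
  have h3 : ∀ j : Fin n, mgf (W j) μ l = Real.cosh (l * a j) := by
    intro j
    have hmap : mgf (W j) μ l = ∫ x, Real.exp (l * a j * x) ∂(Measure.map (Z j) μ) := by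
      have hgm : AEStronglyMeasurable (fun x : ℝ => Real.exp (l * a j * x))
          (Measure.map (Z j) μ) := Measurable.aestronglyMeasurable (Real.measurable_exp.comp (measurable_id.const_mul (l * a j)))
      rw [integral_map (hmeas j).aemeasurable hgm]
      unfold W
      simp only [mgf]
      congr 1; funext ω; ring_nf
    rw [hmap, hlaw j, rad_integral (by fun_prop), Real.cosh_eq]
    ring_nf
  calc ∏ j, mgf (W j) μ l = ∏ j, Real.cosh (l * a j) := Finset.prod_congr rfl (fun j _ => h3 j)
    _ ≤ ∏ j, Real.exp ((l * a j)^2 / 2) := by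
        refine Finset.prod_le_prod (fun j _ => (Real.cosh_pos _).le) ?_
        exact fun j _ => Real.cosh_le_exp_half_sq _
    _ = Real.exp (∑ j, (l * a j)^2 / 2) := by rw [Real.exp_sum]
    _ = Real.exp (l^2 * (∑ j, (a j)^2) / 2) := by
        congr 1
        rw [Finset.mul_sum, ← Finset.sum_div]
        congr 1
        exact Finset.sum_congr rfl (fun j _ => by ring)

lemma meas_sup' {α : Type*} (A : Finset α) (hA : A.Nonempty) (f : α → Ω → ℝ)
    (hf : ∀ a, Measurable (f a)) : Measurable (fun ω => A.sup' hA (fun a => f a ω)) := by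
  induction hA using Finset.Nonempty.cons_induction with
  | singleton a => simpa using hf a
  | cons a A ha hAne ih =>
      simp only [Finset.sup'_cons (H := hAne)]
      exact (hf a).sup ih

set_option maxHeartbeats 1000000 in
lemma integrable_abs_sup (hmeas : ∀ i, Measurable (Z i))
    (hlaw : ∀ i, Measure.map (Z i) μ = radMeasure)
    (A : Finset (Fin n → ℝ)) (hA : A.Nonempty) :
    Integrable (fun ω => A.sup' hA (fun a => |∑ j, Z j ω * a j|)) μ := by
  refine Integrable.mono' (integrable_const (A.sup' hA (fun a => ∑ j, |a j|)))
    ((meas_sup' A hA _ (fun a => (G_meas hmeas a).abs)).aestronglyMeasurable) ?_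
  filter_upwards [Z_ae_bound hmeas hlaw] with ω hω
  have h1 : ∀ a ∈ A, |∑ j, Z j ω * a j| ≤ ∑ j, |a j| := by
    intro a _
    calc |∑ j, Z j ω * a j| ≤ ∑ j, |Z j ω * a j| := Finset.abs_sum_le_sum_abs _ _
      _ ≤ ∑ j, |a j| := by
          refine Finset.sum_le_sum (fun j _ => ?_)
          rw [abs_mul]
          calc |Z j ω| * |a j| ≤ 1 * |a j| :=
                mul_le_mul_of_nonneg_right (hω j) (abs_nonneg _)
            _ = |a j| := one_mul _
  have h2 : A.sup' hA (fun a => |∑ j, Z j ω * a j|) ≤ A.sup' hA (fun a => ∑ j, |a j|) :=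
    Finset.sup'_le hA _ (fun a ha => (Finset.le_sup'_iff hA).2 ⟨a, ha, h1 a ha⟩)
  have h3 : 0 ≤ A.sup' hA (fun a => |∑ j, Z j ω * a j|) := by
    obtain ⟨a0, ha0⟩ := id hA
    exact (Finset.le_sup'_iff hA).2 ⟨a0, ha0, abs_nonneg _⟩
  rw [Real.norm_eq_abs, abs_of_nonneg h3]
  exact h2

lemma integrable_exp_G (hmeas : ∀ i, Measurable (Z i))
    (hlaw : ∀ i, Measure.map (Z i) μ = radMeasure)
    (a : Fin n → ℝ) (l : ℝ) :
    Integrable (fun ω => Real.exp (l * ∑ j, Z j ω * a j)) μ := by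
  refine Integrable.mono' (integrable_const (Real.exp (|l| * ∑ j, |a j|)))
    (((G_meas hmeas a).const_mul l).exp.aestronglyMeasurable) ?_
  · filter_upwards [Z_ae_bound hmeas hlaw] with ω hω
    rw [Real.norm_eq_abs, abs_of_nonneg (Real.exp_pos _).le]
    apply Real.exp_le_exp.2
    calc l * ∑ j, Z j ω * a j ≤ |l * ∑ j, Z j ω * a j| := le_abs_self _
      _ = |l| * |∑ j, Z j ω * a j| := abs_mul _ _
      _ ≤ |l| * ∑ j, |a j| := by
          refine mul_le_mul_of_nonneg_left ?_ (abs_nonneg _)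
          calc |∑ j, Z j ω * a j| ≤ ∑ j, |Z j ω * a j| := Finset.abs_sum_le_sum_abs _ _
            _ ≤ ∑ j, |a j| := by
                refine Finset.sum_le_sum (fun j _ => ?_)
                rw [abs_mul]
                calc |Z j ω| * |a j| ≤ 1 * |a j| :=
                      mul_le_mul_of_nonneg_right (hω j) (abs_nonneg _)
                  _ = |a j| := one_mul _

/-- Maximal inequality for finitely many Rademacher linear combinations. -/
lemma max_bound (hmeas : ∀ i, Measurable (Z i))
    (hindep : iIndepFun Z μ)
    (hlaw : ∀ i, Measure.map (Z i) μ = radMeasure)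
    (A : Finset (Fin n → ℝ)) (hA : A.Nonempty) (σ : ℝ) (hσ : 0 < σ)
    (hbd : ∀ a ∈ A, ∑ j, (a j)^2 ≤ σ^2) :
    ∫ ω, A.sup' hA (fun a => |∑ j, Z j ω * a j|) ∂μ
      ≤ σ * (1 + Real.sqrt (2 * Real.log (2 * A.card))) := by
  set N : ℝ := (A.card : ℝ) with hN
  have hN1 : 1 ≤ N := by
    have h : 1 ≤ A.card := Finset.card_pos.2 hA
    rw [hN]
    exact_mod_cast h
  set L : ℝ := Real.log (2 * N) with hLdef
  have hL2 : Real.log 2 ≤ L := Real.log_le_log (by norm_num) (by nlinarith)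
  have hL1 : 1 ≤ 2 * L := by
    have h4 : Real.log 2 = Real.log 4 / 2 := by
      rw [show (4:ℝ) = 2^2 by norm_num, Real.log_pow]; push_cast; ring
    have : (1:ℝ) ≤ Real.log 4 := by
      rw [Real.le_log_iff_exp_le (by norm_num)]
      have := Real.exp_one_lt_d9
      linarith
    linarith
  have hLpos : 0 < L := by linarith
  have hsqrt : 1 ≤ Real.sqrt (2 * L) := by
    rw [show (1:ℝ) = Real.sqrt 1 by simp]
    exact Real.sqrt_le_sqrt hL1
  have hsqrtpos : 0 < Real.sqrt (2 * L) := by linarith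
  set l : ℝ := Real.sqrt (2 * L) / σ with hldef
  have hl : 0 < l := div_pos hsqrtpos hσ
  set astar : ℝ := σ * Real.sqrt (2 * L) with hastar
  have hsq : Real.sqrt (2 * L) ^ 2 = 2 * L := Real.sq_sqrt (by linarith)
  have hls : l * σ = Real.sqrt (2 * L) := by
    rw [hldef]; field_simp
  have hl2σ : l^2 * σ^2 = 2 * L := by
    rw [← mul_pow, hls, hsq]
  have hla : l * astar = 2 * L := by
    rw [hastar, show l * (σ * Real.sqrt (2 * L)) = (l * σ) * Real.sqrt (2 * L) by ring, hls,
      ← pow_two, hsq]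
  have hkey : l * astar = L + l^2 * σ^2 / 2 := by
    rw [hla, hl2σ]; ring
  have hpair : ∀ a : Fin n → ℝ, Integrable (fun ω => Real.exp (l * ∑ j, Z j ω * a j) +
      Real.exp (-l * ∑ j, Z j ω * a j)) μ := by
    intro a
    have h1 := integrable_exp_G hmeas hlaw a l
    have h2 : Integrable (fun ω => Real.exp (-l * ∑ j, Z j ω * a j)) μ := by
      simpa using integrable_exp_G hmeas hlaw a (-l)
    exact h1.add h2
  have hexpint : Integrable (fun ω => ∑ a ∈ A,
      (Real.exp (l * ∑ j, Z j ω * a j) + Real.exp (-l * ∑ j, Z j ω * a j))) μ :=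
    integrable_finset_sum _ (fun a _ => hpair a)
  have hexp : ∀ ω, Real.exp (l * A.sup' hA (fun a => |∑ j, Z j ω * a j|)) ≤
      ∑ a ∈ A, (Real.exp (l * ∑ j, Z j ω * a j) + Real.exp (-l * ∑ j, Z j ω * a j)) := by
    intro ω
    obtain ⟨a0, ha0A, ha0⟩ := Finset.exists_mem_eq_sup' hA (fun a => |∑ j, Z j ω * a j|)
    rw [ha0]
    have h1 : Real.exp (l * |∑ j, Z j ω * a0 j|) ≤
        Real.exp (l * ∑ j, Z j ω * a0 j) + Real.exp (-l * ∑ j, Z j ω * a0 j) := by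
      rcases abs_cases (∑ j, Z j ω * a0 j) with ⟨h, _⟩ | ⟨h, _⟩
      · rw [h]
        exact le_add_of_nonneg_right (Real.exp_pos _).le
      · rw [h, show l * -(∑ j, Z j ω * a0 j) = -l * (∑ j, Z j ω * a0 j) by ring]
        exact le_add_of_nonneg_left (Real.exp_pos _).le
    refine le_trans h1 ?_
    apply Finset.single_le_sum (f := fun a => Real.exp (l * ∑ j, Z j ω * a j) +
      Real.exp (-l * ∑ j, Z j ω * a j))
      (fun a _ => add_nonneg (Real.exp_pos _).le (Real.exp_pos _).le) ha0A
  have hpoint : ∀ ω, A.sup' hA (fun a => |∑ j, Z j ω * a j|) ≤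
      astar + (Real.exp (-(l * astar)) / l) *
        ∑ a ∈ A, (Real.exp (l * ∑ j, Z j ω * a j) + Real.exp (-l * ∑ j, Z j ω * a j)) := by
    intro ω
    set M : ℝ := A.sup' hA (fun a => |∑ j, Z j ω * a j|) with hMdef
    set s : ℝ := ∑ a ∈ A, (Real.exp (l * ∑ j, Z j ω * a j) +
      Real.exp (-l * ∑ j, Z j ω * a j)) with hsdef
    have h2 : l * (M - astar) ≤ Real.exp (l * (M - astar)) := by
      have := Real.add_one_le_exp (l * (M - astar)); linarith
    have h3 : Real.exp (l * (M - astar)) = Real.exp (l * M) * Real.exp (-(l * astar)) := by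
      rw [← Real.exp_add]; ring_nf
    have h4 : l * (M - astar) ≤ s * Real.exp (-(l * astar)) := by
      refine le_trans h2 ?_
      rw [h3]
      exact mul_le_mul_of_nonneg_right (hexp ω) (Real.exp_pos _).le
    have h5 : M - astar ≤ (Real.exp (-(l * astar)) / l) * s := by
      rw [div_mul_eq_mul_div, le_div_iff₀ hl]
      calc (M - astar) * l = l * (M - astar) := by ring
        _ ≤ s * Real.exp (-(l * astar)) := h4
        _ = Real.exp (-(l * astar)) * s := by ring
    linarith
  have hMint : Integrable (fun ω => A.sup' hA (fun a => |∑ j, Z j ω * a j|)) μ :=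
    integrable_abs_sup hmeas hlaw A hA
  have hRint : Integrable (fun ω => astar + (Real.exp (-(l * astar)) / l) *
      ∑ a ∈ A, (Real.exp (l * ∑ j, Z j ω * a j) + Real.exp (-l * ∑ j, Z j ω * a j))) μ :=
    Integrable.add (integrable_const _) (Integrable.const_mul hexpint _)
  have hint := integral_mono hMint hRint hpoint
  refine le_trans hint ?_
  rw [integral_add (integrable_const _) (Integrable.const_mul hexpint _),
    integral_const, probReal_univ, smul_eq_mul, one_mul, integral_const_mul]
  have hsum : ∫ ω, (∑ a ∈ A, (Real.exp (l * ∑ j, Z j ω * a j) +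
      Real.exp (-l * ∑ j, Z j ω * a j))) ∂μ ≤ 2 * N * Real.exp (l^2 * σ^2 / 2) := by
    rw [integral_finset_sum _ (fun a _ => hpair a)]
    have hterm : ∀ a ∈ A, (∫ ω, (Real.exp (l * ∑ j, Z j ω * a j) +
        Real.exp (-l * ∑ j, Z j ω * a j)) ∂μ) ≤ 2 * Real.exp (l^2 * σ^2 / 2) := by
      intro a ha
      rw [integral_add (integrable_exp_G hmeas hlaw a l)
        (by simpa using integrable_exp_G hmeas hlaw a (-l) :
          Integrable (fun ω => Real.exp (-l * ∑ j, Z j ω * a j)) μ)]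
      have hb1 : ∫ ω, Real.exp (l * ∑ j, Z j ω * a j) ∂μ ≤ Real.exp (l^2 * σ^2 / 2) := by
        refine le_trans (mgf_bound hmeas hindep hlaw a l) ?_
        apply Real.exp_le_exp.2
        have := hbd a ha
        nlinarith [sq_nonneg l]
      have hb2 : ∫ ω, Real.exp (-l * ∑ j, Z j ω * a j) ∂μ ≤ Real.exp (l^2 * σ^2 / 2) := by
        refine le_trans (mgf_bound hmeas hindep hlaw a (-l)) ?_
        apply Real.exp_le_exp.2
        have := hbd a ha
        nlinarith [sq_nonneg l]
      linarith
    calc ∑ a ∈ A, (∫ ω, (Real.exp (l * ∑ j, Z j ω * a j) +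
          Real.exp (-l * ∑ j, Z j ω * a j)) ∂μ)
        ≤ ∑ _a ∈ A, 2 * Real.exp (l^2 * σ^2 / 2) := Finset.sum_le_sum hterm
      _ = 2 * N * Real.exp (l^2 * σ^2 / 2) := by
          rw [Finset.sum_const, nsmul_eq_mul, hN]; ring
  have hcoef : 0 ≤ Real.exp (-(l * astar)) / l := by positivity
  have hstep : astar + (Real.exp (-(l * astar)) / l) *
      ∫ ω, (∑ a ∈ A, (Real.exp (l * ∑ j, Z j ω * a j) +
        Real.exp (-l * ∑ j, Z j ω * a j))) ∂μ
      ≤ astar + (Real.exp (-(l * astar)) / l) * (2 * N * Real.exp (l^2 * σ^2 / 2)) := by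
    have := mul_le_mul_of_nonneg_left hsum hcoef
    linarith
  refine le_trans hstep ?_
  have hfinal : (Real.exp (-(l * astar)) / l) * (2 * N * Real.exp (l^2 * σ^2 / 2)) = 1 / l := by
    have h2N : Real.exp L = 2 * N := by
      rw [hLdef, Real.exp_log (by nlinarith)]
    rw [div_mul_eq_mul_div]
    congr 1
    rw [← h2N, ← Real.exp_add, ← Real.exp_add, hkey]
    norm_num
  rw [hfinal]
  have h1l : 1 / l = σ / Real.sqrt (2 * L) := by
    rw [hldef]
    rw [one_div_div]
  have hσdiv : σ / Real.sqrt (2 * L) ≤ σ := by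
    rw [div_le_iff₀ hsqrtpos]
    nlinarith
  rw [h1l, hastar, mul_add, mul_one]
  linarith

end Aux

/-! ### The deterministic chaining structure -/

section Chain

open Finset

variable {n m : ℕ}

/-- Squared ℓ₂ norm of the frequency vector at time `t`. -/
noncomputable def SS (p : Fin m → Fin n) (t : ℕ) : ℝ := ∑ j, (freq p t j)^2

lemma freq_nonneg (p : Fin m → Fin n) (t : ℕ) (j : Fin n) : 0 ≤ freq p t j :=
  Nat.cast_nonneg _

lemma freq_mono (p : Fin m → Fin n) {s t : ℕ} (h : s ≤ t) (j : Fin n) :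
    freq p s j ≤ freq p t j := by
  unfold freq
  have hsub : (Finset.univ.filter fun t' : Fin m => (t' : ℕ) < s ∧ p t' = j)
      ⊆ (Finset.univ.filter fun t' : Fin m => (t' : ℕ) < t ∧ p t' = j) := by
    intro x hx
    simp only [Finset.mem_filter] at *
    exact ⟨hx.1, lt_of_lt_of_le hx.2.1 h, hx.2.2⟩
  exact_mod_cast Finset.card_le_card hsub

lemma SS_nonneg (p : Fin m → Fin n) (t : ℕ) : 0 ≤ SS p t :=
  Finset.sum_nonneg (fun j _ => sq_nonneg _)

lemma SS_mono (p : Fin m → Fin n) {s t : ℕ} (h : s ≤ t) : SS p s ≤ SS p t :=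
  Finset.sum_le_sum (fun j _ => pow_le_pow_left₀ (freq_nonneg p s j) (freq_mono p h j) 2)

lemma SS_zero (p : Fin m → Fin n) : SS p 0 = 0 := by
  unfold SS freq
  simp

lemma freq_succ_self (p : Fin m → Fin n) {t : ℕ} (ht : t < m) :
    freq p t (p ⟨t, ht⟩) + 1 ≤ freq p (t+1) (p ⟨t, ht⟩) := by
  unfold freq
  have hins : insert (⟨t, ht⟩ : Fin m)
      (Finset.univ.filter fun t' : Fin m => (t' : ℕ) < t ∧ p t' = p ⟨t, ht⟩)
      ⊆ (Finset.univ.filter fun t' : Fin m => (t' : ℕ) < t + 1 ∧ p t' = p ⟨t, ht⟩) := by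
    intro x hx
    rcases Finset.mem_insert.1 hx with h | h
    · subst h
      exact Finset.mem_filter.2 ⟨Finset.mem_univ _, by simp, rfl⟩
    · have := Finset.mem_filter.1 h
      exact Finset.mem_filter.2 ⟨Finset.mem_univ _, by omega, this.2.2⟩
  have hnotmem : (⟨t, ht⟩ : Fin m) ∉
      (Finset.univ.filter fun t' : Fin m => (t' : ℕ) < t ∧ p t' = p ⟨t, ht⟩) := by
    simp
  have hcard := Finset.card_le_card hins
  rw [Finset.card_insert_of_notMem hnotmem] at hcard
  exact_mod_cast hcard

lemma SS_succ (p : Fin m → Fin n) {t : ℕ} (ht : t < m) : SS p t + 1 ≤ SS p (t+1) := by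
  set j0 := p ⟨t, ht⟩ with hj0
  have hterm : ∀ j, (freq p t j)^2 ≤ (freq p (t+1) j)^2 :=
    fun j => pow_le_pow_left₀ (freq_nonneg p t j) (freq_mono p (Nat.le_succ t) j) 2
  have hj0term : (freq p t j0)^2 + 1 ≤ (freq p (t+1) j0)^2 := by
    have h1 := freq_succ_self p ht
    have h2 := freq_nonneg p t j0
    rw [← hj0] at h1
    nlinarith
  have hsum : (1:ℝ) ≤ ∑ j, ((freq p (t+1) j)^2 - (freq p t j)^2) := by
    have hs := Finset.single_le_sum
      (f := fun j => (freq p (t+1) j)^2 - (freq p t j)^2)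
      (fun j _ => sub_nonneg.2 (hterm j)) (Finset.mem_univ j0)
    have hs' : freq p (t+1) j0 ^ 2 - freq p t j0 ^ 2
        ≤ ∑ j, ((freq p (t+1) j)^2 - (freq p t j)^2) := hs
    linarith
  rw [Finset.sum_sub_distrib] at hsum
  unfold SS
  linarith

lemma dist_le (p : Fin m → Fin n) {s t : ℕ} (h : s ≤ t) :
    ∑ j, (freq p t j - freq p s j)^2 ≤ SS p t - SS p s := by
  unfold SS
  rw [← Finset.sum_sub_distrib]
  refine Finset.sum_le_sum (fun j _ => ?_)
  nlinarith [freq_mono p h j, freq_nonneg p s j]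

open Classical in
/-- Last time `t ≤ m` such that `SS p t ≤ c`. -/
noncomputable def TT (p : Fin m → Fin n) (c : ℝ) : ℕ :=
  ((Finset.range (m+1)).filter (fun t => SS p t ≤ c)).sup id

lemma TT_le (p : Fin m → Fin n) (c : ℝ) : TT p c ≤ m := by
  classical
  refine Finset.sup_le (fun b hb => ?_)
  have := (Finset.mem_filter.1 hb).1
  simpa [Nat.lt_succ_iff] using Finset.mem_range.1 this

lemma le_TT (p : Fin m → Fin n) {c : ℝ} {t : ℕ} (ht : t ≤ m) (hSS : SS p t ≤ c) :
    t ≤ TT p c := by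
  classical
  exact Finset.le_sup (f := id) (Finset.mem_filter.2 ⟨Finset.mem_range.2 (by omega), hSS⟩)

lemma SS_TT (p : Fin m → Fin n) {c : ℝ} (hc : 0 ≤ c) : SS p (TT p c) ≤ c := by
  classical
  have hne : ((Finset.range (m+1)).filter (fun t => SS p t ≤ c)).Nonempty :=
    ⟨0, Finset.mem_filter.2 ⟨Finset.mem_range.2 (by omega), by rw [SS_zero]; exact hc⟩⟩
  obtain ⟨b, hb, hbeq⟩ := Finset.exists_mem_eq_sup' hne id
  have : TT p c = b := by
    rw [TT, ← Finset.sup'_eq_sup hne id, hbeq]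
    rfl
  rw [this]
  exact (Finset.mem_filter.1 hb).2

lemma TT_mono (p : Fin m → Fin n) {c c' : ℝ} (hc : 0 ≤ c) (h : c ≤ c') :
    TT p c ≤ TT p c' :=
  le_TT p (TT_le p c) (le_trans (SS_TT p hc) h)

/-- Index of the level-`k` cell containing `SS p s`. -/
noncomputable def idx (p : Fin m → Fin n) (k s : ℕ) : ℕ :=
  ⌊SS p s * 4^k / SS p m⌋₊

/-- Level-`k` net point assigned to time `s`. -/
noncomputable def piT (p : Fin m → Fin n) (k s : ℕ) : ℕ :=
  TT p (((idx p k s : ℝ) + 1) * (SS p m / 4^k))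

variable (p : Fin m → Fin n)

lemma piT_le (k s : ℕ) : piT p k s ≤ m := TT_le p _

lemma le_piT (hR : 1 ≤ SS p m) (k : ℕ) {s : ℕ} (hs : s ≤ m) : s ≤ piT p k s := by
  have hRpos : (0:ℝ) < SS p m := by linarith
  apply le_TT p hs
  have h1 : SS p s * 4^k / SS p m < (idx p k s : ℝ) + 1 := Nat.lt_floor_add_one _
  have h2 : SS p s = SS p s * 4^k / SS p m * (SS p m / 4^k) := by field_simp
  rw [h2]
  exact mul_le_mul_of_nonneg_right h1.le (by positivity)

lemma SS_piT_le (hR : 1 ≤ SS p m) (k s : ℕ) :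
    SS p (piT p k s) ≤ ((idx p k s : ℝ) + 1) * (SS p m / 4^k) := by
  have hRpos : (0:ℝ) < SS p m := by linarith
  exact SS_TT p (by positivity)

lemma idx_mul_le (hR : 1 ≤ SS p m) (k s : ℕ) :
    (idx p k s : ℝ) * (SS p m / 4^k) ≤ SS p s := by
  have hRpos : (0:ℝ) < SS p m := by linarith
  have h1 : (idx p k s : ℝ) ≤ SS p s * 4^k / SS p m :=
    Nat.floor_le (div_nonneg (mul_nonneg (SS_nonneg p s) (by positivity)) hRpos.le)
  have h2 : SS p s * 4^k / SS p m * (SS p m / 4^k) = SS p s := by field_simp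
  calc (idx p k s : ℝ) * (SS p m / 4^k)
      ≤ SS p s * 4^k / SS p m * (SS p m / 4^k) :=
        mul_le_mul_of_nonneg_right h1 (by positivity)
    _ = SS p s := h2

lemma idx_le (hR : 1 ≤ SS p m) (k : ℕ) {s : ℕ} (hs : s ≤ m) : idx p k s ≤ 4^k := by
  have hRpos : (0:ℝ) < SS p m := by linarith
  have h0 : (0:ℝ) < (4:ℝ)^k := by positivity
  have h1 : SS p s * 4^k / SS p m ≤ ((4^k : ℕ) : ℝ) := by
    rw [div_le_iff₀ hRpos]
    push_cast
    nlinarith [SS_mono p hs]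
  calc idx p k s = ⌊SS p s * 4^k / SS p m⌋₊ := rfl
    _ ≤ ⌊((4^k : ℕ) : ℝ)⌋₊ := Nat.floor_le_floor h1
    _ = 4^k := Nat.floor_natCast _

lemma idx_succ (k s : ℕ) : idx p k s = idx p (k+1) s / 4 := by
  unfold idx
  have h : SS p s * 4^k / SS p m = SS p s * 4^(k+1) / SS p m / ((4:ℕ):ℝ) := by
    push_cast
    ring
  rw [h, Nat.floor_div_natCast]

lemma piT_succ_le (hR : 1 ≤ SS p m) (k s : ℕ) : piT p (k+1) s ≤ piT p k s := by
  have hRpos : (0:ℝ) < SS p m := by linarith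
  refine TT_mono p (by positivity) ?_
  rw [idx_succ p k s]
  set i := idx p (k+1) s with hi
  have hq : (i:ℝ) + 1 ≤ 4*((i/4 : ℕ):ℝ) + 4 := by
    have h1 : i ≤ 4*(i/4) + 3 := by omega
    have h2 : (i:ℝ) ≤ 4*((i/4 : ℕ):ℝ) + 3 := by exact_mod_cast h1
    linarith
  have he : (0:ℝ) ≤ SS p m / 4^(k+1) := by positivity
  calc ((i:ℝ)+1) * (SS p m / 4^(k+1))
      ≤ (4*((i/4 : ℕ):ℝ) + 4) * (SS p m / 4^(k+1)) := mul_le_mul_of_nonneg_right hq he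
    _ = (((i/4 : ℕ):ℝ) + 1) * (SS p m / 4^k) := by ring

lemma link_bound (hR : 1 ≤ SS p m) (k : ℕ) {s : ℕ} (hs : s ≤ m) :
    ∑ j, (freq p (piT p k s) j - freq p (piT p (k+1) s) j)^2 ≤ SS p m / 4^k := by
  have hRpos : (0:ℝ) < SS p m := by linarith
  have hvu : piT p (k+1) s ≤ piT p k s := piT_succ_le p hR k s
  have h1 := dist_le p hvu
  have h2 : SS p (piT p k s) ≤ (((idx p (k+1) s / 4 : ℕ):ℝ) + 1) * (SS p m / 4^k) := by
    have := SS_piT_le p hR k s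
    rwa [idx_succ p k s] at this
  have h3 : (idx p (k+1) s : ℝ) * (SS p m / 4^(k+1)) ≤ SS p (piT p (k+1) s) :=
    le_trans (idx_mul_le p hR (k+1) s) (SS_mono p (le_piT p hR (k+1) hs))
  set i := idx p (k+1) s with hi
  have hqi : 4*((i/4 : ℕ):ℝ) ≤ (i:ℝ) := by
    have h4 : 4*(i/4) ≤ i := by omega
    exact_mod_cast h4
  have he : (0:ℝ) ≤ SS p m / 4^(k+1) := by positivity
  calc ∑ j, (freq p (piT p k s) j - freq p (piT p (k+1) s) j)^2
      ≤ SS p (piT p k s) - SS p (piT p (k+1) s) := h1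
    _ ≤ (((i/4 : ℕ):ℝ) + 1) * (SS p m / 4^k) - (i:ℝ) * (SS p m / 4^(k+1)) := by
        exact sub_le_sub h2 h3
    _ = (4*((i/4 : ℕ):ℝ) + 4 - (i:ℝ)) * (SS p m / 4^(k+1)) := by ring
    _ ≤ 4 * (SS p m / 4^(k+1)) := mul_le_mul_of_nonneg_right (by linarith) he
    _ = SS p m / 4^k := by ring

lemma piT_fix (hR : 1 ≤ SS p m) {K s : ℕ} (hs : s ≤ m) (hK : SS p m < 4^K) :
    piT p K s = s := by
  have hRpos : (0:ℝ) < SS p m := by linarith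
  have h1 : s ≤ piT p K s := le_piT p hR K hs
  rcases eq_or_lt_of_le h1 with h | h
  · exact h.symm
  · exfalso
    have hsm : s < m := lt_of_lt_of_le h (piT_le p K s)
    have h2 : SS p (s+1) ≤ SS p (piT p K s) := SS_mono p h
    have h3 := SS_succ p hsm
    have h4 := SS_piT_le p hR K s
    have h5 := idx_mul_le p hR K s
    have h6 : SS p m / 4^K < 1 := by
      rw [div_lt_one (by positivity)]
      exact hK
    linarith

lemma piT_zero_eq (hR : 1 ≤ SS p m) {s : ℕ} (hs : s ≤ m) : piT p 0 s = m := by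
  refine le_antisymm (piT_le p 0 s) (le_TT p le_rfl ?_)
  rw [pow_zero, div_one]
  have h1 : (0:ℝ) ≤ (idx p 0 s : ℝ) := Nat.cast_nonneg _
  nlinarith

end Chain

lemma chain_geom_eq (K : ℕ) :
    ∑ k ∈ Finset.range K, ((k:ℝ)+4)/2^k = 10 - 2*((K:ℝ)+5)/2^K := by
  induction K with
  | zero => norm_num
  | succ K ih =>
      rw [Finset.sum_range_succ, ih]
      have h2 : (2:ℝ)^K ≠ 0 := by positivity
      push_cast
      field_simp
      ring

lemma chain_geom_le (K : ℕ) : ∑ k ∈ Finset.range K, ((k:ℝ)+4)/2^k ≤ 10 := by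
  rw [chain_geom_eq]
  have h : (0:ℝ) ≤ 2*((K:ℝ)+5)/2^K := by positivity
  linarith

theorem chaining_inequality_bernoulli :
    ∃ C' : ℝ, 0 < C' ∧
      ∀ (n m : ℕ), 0 < m →
      ∀ (p : Fin m → Fin n) (Ω : Type) [MeasurableSpace Ω] (μ : Measure Ω)
        [IsProbabilityMeasure μ] (Z : Fin n → Ω → ℝ),
        (∀ i, Measurable (Z i)) →
        iIndepFun Z μ →
        (∀ i, Measure.map (Z i) μ = radMeasure) →
        (∫ ω, (⨆ t : Fin m, |∑ j, Z j ω * freq p ((t : ℕ) + 1) j|) ∂μ)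
          ≤ C' * l2norm (freq p m) := by
  refine ⟨13, by norm_num, ?_⟩
  intro n m hm p Ω mΩ μ hPM Z hmeas hindep hlaw
  haveI : Nonempty (Fin m) := ⟨⟨0, hm⟩⟩
  have hR : 1 ≤ SS p m := by
    have h1 := SS_succ p (t := 0) hm
    have h2 := SS_mono p (show 0+1 ≤ m from hm)
    rw [SS_zero] at h1
    linarith
  have hRpos : (0:ℝ) < SS p m := by linarith
  obtain ⟨K, hK⟩ : ∃ K : ℕ, SS p m < 4^K :=
    pow_unbounded_of_one_lt (SS p m) (by norm_num : (1:ℝ) < 4)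
  set q : Fin n → ℝ := freq p m with hq
  -- the finite families of chaining vectors
  set d : ℕ → ℕ → (Fin n → ℝ) :=
    fun k s => (fun j => freq p (piT p k s) j - freq p (piT p (k+1) s) j) with hd
  set A : ℕ → Finset (Fin n → ℝ) :=
    fun k => Finset.image (fun t : Fin m => d k ((t:ℕ)+1)) Finset.univ with hA
  have hAne : ∀ k, (A k).Nonempty := fun k => Finset.Nonempty.image Finset.univ_nonempty _
  -- pointwise bound
  have hpoint : ∀ ω, (⨆ t : Fin m, |∑ j, Z j ω * freq p ((t : ℕ) + 1) j|) ≤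
      |∑ j, Z j ω * q j| +
        ∑ k ∈ Finset.range K, (A k).sup' (hAne k) (fun a => |∑ j, Z j ω * a j|) := by
    intro ω
    refine ciSup_le (fun t => ?_)
    set s : ℕ := (t:ℕ)+1 with hsdef
    have hs : s ≤ m := t.isLt
    have htele : ∑ k ∈ Finset.range K, ((∑ j, Z j ω * freq p (piT p (k+1) s) j) -
        (∑ j, Z j ω * freq p (piT p k s) j)) =
        (∑ j, Z j ω * freq p s j) - (∑ j, Z j ω * q j) := by
      rw [Finset.sum_range_sub (fun k => ∑ j, Z j ω * freq p (piT p k s) j)]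
      rw [piT_fix p hR hs hK, piT_zero_eq p hR hs]
    have habs : ∀ k ∈ Finset.range K,
        |(∑ j, Z j ω * freq p (piT p (k+1) s) j) - (∑ j, Z j ω * freq p (piT p k s) j)|
          ≤ (A k).sup' (hAne k) (fun a => |∑ j, Z j ω * a j|) := by
      intro k _
      have hdk : (∑ j, Z j ω * freq p (piT p (k+1) s) j) - (∑ j, Z j ω * freq p (piT p k s) j)
          = -(∑ j, Z j ω * d k s j) := by
        rw [← Finset.sum_sub_distrib, ← Finset.sum_neg_distrib]
        refine Finset.sum_congr rfl (fun j _ => ?_)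
        rw [hd]
        ring
      rw [hdk, abs_neg]
      refine (Finset.le_sup'_iff (hAne k)).2 ⟨d k s, ?_, le_rfl⟩
      exact Finset.mem_image.2 ⟨t, Finset.mem_univ t, rfl⟩
    have h1 : (∑ j, Z j ω * freq p s j) = (∑ j, Z j ω * q j) +
        ∑ k ∈ Finset.range K, ((∑ j, Z j ω * freq p (piT p (k+1) s) j) -
          (∑ j, Z j ω * freq p (piT p k s) j)) := by
      rw [htele]; ring
    calc |∑ j, Z j ω * freq p s j|
        = |(∑ j, Z j ω * q j) + ∑ k ∈ Finset.range K,
            ((∑ j, Z j ω * freq p (piT p (k+1) s) j) -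
              (∑ j, Z j ω * freq p (piT p k s) j))| := by rw [← h1]
      _ ≤ |∑ j, Z j ω * q j| + |∑ k ∈ Finset.range K,
            ((∑ j, Z j ω * freq p (piT p (k+1) s) j) -
              (∑ j, Z j ω * freq p (piT p k s) j))| := abs_add_le _ _
      _ ≤ |∑ j, Z j ω * q j| + ∑ k ∈ Finset.range K,
            |(∑ j, Z j ω * freq p (piT p (k+1) s) j) -
              (∑ j, Z j ω * freq p (piT p k s) j)| :=
          add_le_add_right (Finset.abs_sum_le_sum_abs _ _) _
      _ ≤ _ := add_le_add_right (Finset.sum_le_sum habs) _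
  -- integrability
  have hYm_eq : (fun ω => |∑ j, Z j ω * q j|) = fun ω =>
      ({q} : Finset (Fin n → ℝ)).sup' ⟨q, Finset.mem_singleton_self q⟩
        (fun a => |∑ j, Z j ω * a j|) := by
    funext ω
    rw [Finset.sup'_singleton]
  have hGint : Integrable (fun ω => |∑ j, Z j ω * q j|) μ := by
    rw [hYm_eq]
    exact integrable_abs_sup hmeas hlaw _ _
  have hMkint : ∀ k, Integrable
      (fun ω => (A k).sup' (hAne k) (fun a => |∑ j, Z j ω * a j|)) μ :=
    fun k => integrable_abs_sup hmeas hlaw (A k) (hAne k)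
  have hLHSmeas : Measurable (fun ω => ⨆ t : Fin m, |∑ j, Z j ω * freq p ((t : ℕ) + 1) j|) :=
    Measurable.iSup (fun t => (G_meas hmeas _).abs)
  have hLHSint : Integrable
      (fun ω => ⨆ t : Fin m, |∑ j, Z j ω * freq p ((t : ℕ) + 1) j|) μ := by
    refine Integrable.mono' (integrable_const (∑ j, freq p m j))
      hLHSmeas.aestronglyMeasurable ?_
    filter_upwards [Z_ae_bound hmeas hlaw] with ω hω
    have hb : ∀ t : Fin m, |∑ j, Z j ω * freq p ((t : ℕ) + 1) j| ≤ ∑ j, freq p m j := by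
      intro t
      calc |∑ j, Z j ω * freq p ((t : ℕ) + 1) j|
          ≤ ∑ j, |Z j ω * freq p ((t : ℕ) + 1) j| := Finset.abs_sum_le_sum_abs _ _
        _ ≤ ∑ j, freq p m j := by
            refine Finset.sum_le_sum (fun j _ => ?_)
            rw [abs_mul, abs_of_nonneg (freq_nonneg p _ j)]
            calc |Z j ω| * freq p ((t : ℕ) + 1) j ≤ 1 * freq p ((t : ℕ) + 1) j :=
                  mul_le_mul_of_nonneg_right (hω j) (freq_nonneg p _ j)
              _ = freq p ((t : ℕ) + 1) j := one_mul _
              _ ≤ freq p m j := freq_mono p t.isLt j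
    have hbdd : BddAbove (Set.range fun t : Fin m => |∑ j, Z j ω * freq p ((t:ℕ)+1) j|) :=
      (Set.finite_range _).bddAbove
    have hnn : 0 ≤ ⨆ t : Fin m, |∑ j, Z j ω * freq p ((t : ℕ) + 1) j| :=
      le_ciSup_of_le hbdd (Classical.arbitrary (Fin m)) (abs_nonneg _)
    rw [Real.norm_eq_abs, abs_of_nonneg hnn]
    exact ciSup_le hb
  have hRHSint : Integrable (fun ω => |∑ j, Z j ω * q j| +
      ∑ k ∈ Finset.range K, (A k).sup' (hAne k) (fun a => |∑ j, Z j ω * a j|)) μ :=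
    hGint.add (integrable_finset_sum _ (fun k _ => hMkint k))
  have hmain := integral_mono hLHSint hRHSint hpoint
  rw [integral_add hGint (integrable_finset_sum _ (fun k _ => hMkint k)),
    integral_finset_sum _ (fun k _ => hMkint k)] at hmain
  -- bound the first term
  have hsqrtpos : 0 < Real.sqrt (SS p m) := Real.sqrt_pos.2 hRpos
  have hsqrt2 : Real.sqrt (2 * Real.log 2) ≤ 2 := by
    have hlt := Real.log_two_lt_d9
    have h4 : 2 * Real.log 2 ≤ 4 := by linarith
    calc Real.sqrt (2 * Real.log 2) ≤ Real.sqrt 4 := Real.sqrt_le_sqrt h4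
      _ = 2 := by
          rw [show (4:ℝ) = 2^2 by norm_num, Real.sqrt_sq (by norm_num : (0:ℝ) ≤ 2)]
  have hYm : ∫ ω, |∑ j, Z j ω * q j| ∂μ ≤ 3 * Real.sqrt (SS p m) := by
    rw [hYm_eq]
    have hbd1 : ∀ a ∈ ({q} : Finset (Fin n → ℝ)), ∑ j, (a j)^2 ≤ (Real.sqrt (SS p m))^2 := by
      intro a ha
      rw [Finset.mem_singleton] at ha
      subst ha
      rw [Real.sq_sqrt hRpos.le, hq]
      exact le_of_eq rfl
    refine le_trans (max_bound hmeas hindep hlaw {q} ⟨q, Finset.mem_singleton_self q⟩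
      (Real.sqrt (SS p m)) hsqrtpos hbd1) ?_
    have hcards : (({q} : Finset (Fin n → ℝ)).card : ℝ) = 1 := by
      rw [Finset.card_singleton]; norm_num
    rw [hcards, mul_one]
    nlinarith [hsqrt2, hsqrtpos.le]
  -- bound the level terms
  have hlevel : ∀ k, ∫ ω, (A k).sup' (hAne k) (fun a => |∑ j, Z j ω * a j|) ∂μ ≤
      Real.sqrt (SS p m) / 2^k * ((k:ℝ)+4) := by
    intro k
    have hσ : (0:ℝ) < Real.sqrt (SS p m) / 2^k := div_pos hsqrtpos (by positivity)
    have hσsq : (Real.sqrt (SS p m) / 2^k)^2 = SS p m / 4^k := by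
      rw [div_pow, Real.sq_sqrt hRpos.le]
      congr 1
      rw [← pow_mul, show (4:ℝ) = 2^2 by norm_num, ← pow_mul]
      ring_nf
    have hbdk : ∀ a ∈ A k, ∑ j, (a j)^2 ≤ (Real.sqrt (SS p m) / 2^k)^2 := by
      intro a ha
      rw [hσsq]
      rw [hA] at ha
      obtain ⟨t, _, rfl⟩ := Finset.mem_image.1 ha
      exact link_bound p hR k (t.isLt : (t:ℕ)+1 ≤ m)
    have hcard : (A k).card ≤ 4^(k+1)+1 := by
      set dd : ℕ → (Fin n → ℝ) := fun i => (fun j =>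
        freq p (TT p ((((i/4 : ℕ) : ℝ)+1) * (SS p m / 4^k))) j -
        freq p (TT p (((i : ℝ)+1) * (SS p m / 4^(k+1)))) j) with hdd
      have hfac : ∀ s : ℕ, d k s = dd (idx p (k+1) s) := by
        intro s
        rw [hdd, hd]
        have h1 : piT p k s = TT p ((((idx p (k+1) s / 4 : ℕ) : ℝ)+1) * (SS p m / 4^k)) := by
          rw [piT, idx_succ p k s]
        have h2 : piT p (k+1) s = TT p (((idx p (k+1) s : ℝ)+1) * (SS p m / 4^(k+1))) := rfl
        funext j
        dsimp only
        rw [h1, h2]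
      have hsub : A k ⊆ Finset.image dd (Finset.range (4^(k+1)+1)) := by
        intro a ha
        rw [hA] at ha
        obtain ⟨t, _, rfl⟩ := Finset.mem_image.1 ha
        refine Finset.mem_image.2 ⟨idx p (k+1) ((t:ℕ)+1), Finset.mem_range.2 ?_, (hfac _).symm⟩
        exact Nat.lt_succ_of_le (idx_le p hR (k+1) (t.isLt : (t:ℕ)+1 ≤ m))
      calc (A k).card ≤ (Finset.image dd (Finset.range (4^(k+1)+1))).card :=
            Finset.card_le_card hsub
        _ ≤ (Finset.range (4^(k+1)+1)).card := Finset.card_image_le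
        _ = 4^(k+1)+1 := Finset.card_range _
    refine le_trans (max_bound hmeas hindep hlaw (A k) (hAne k) _ hσ hbdk) ?_
    have hc1 : 1 ≤ (A k).card := Finset.card_pos.2 (hAne k)
    have hlogk : Real.sqrt (2 * Real.log (2 * (A k).card)) ≤ (k:ℝ)+3 := by
      have h41 : (1:ℝ) ≤ 4^(k+1) := one_le_pow₀ (by norm_num)
      have h2c : (2:ℝ) * (A k).card ≤ 4^(k+2) := by
        have hcc : ((A k).card : ℝ) ≤ 4^(k+1)+1 := by exact_mod_cast hcard
        have h42 : (4:ℝ)^(k+2) = 4 * 4^(k+1) := by ring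
        linarith
      have hcpos : (0:ℝ) < 2 * (A k).card := by
        have : (1:ℝ) ≤ ((A k).card : ℝ) := by exact_mod_cast hc1
        linarith
      have hlog2 : Real.log (2 * (A k).card) ≤ Real.log ((4:ℝ)^(k+2)) :=
        Real.log_le_log hcpos h2c
      have hlog4 : Real.log ((4:ℝ)^(k+2)) = ((k:ℝ)+2) * Real.log 4 := by
        rw [Real.log_pow]; push_cast; ring
      have hl4 : Real.log 4 ≤ 1.4 := by
        rw [show (4:ℝ) = 2^2 by norm_num, Real.log_pow]
        have := Real.log_two_lt_d9
        push_cast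
        linarith
      have hk0 : (0:ℝ) ≤ (k:ℝ) := Nat.cast_nonneg k
      have hlog40 : 0 ≤ Real.log 4 := Real.log_nonneg (by norm_num)
      have harg : 2 * Real.log (2 * (A k).card) ≤ ((k:ℝ)+3)^2 := by
        nlinarith
      calc Real.sqrt (2 * Real.log (2 * (A k).card)) ≤ Real.sqrt (((k:ℝ)+3)^2) :=
            Real.sqrt_le_sqrt harg
        _ = (k:ℝ)+3 := Real.sqrt_sq (by positivity)
    exact mul_le_mul_of_nonneg_left (by linarith) hσ.le
  -- final assembly
  have hsum : ∑ k ∈ Finset.range K,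
      (∫ ω, (A k).sup' (hAne k) (fun a => |∑ j, Z j ω * a j|) ∂μ) ≤
      ∑ k ∈ Finset.range K, Real.sqrt (SS p m) / 2^k * ((k:ℝ)+4) :=
    Finset.sum_le_sum (fun k _ => hlevel k)
  have hgeom : ∑ k ∈ Finset.range K, Real.sqrt (SS p m) / 2^k * ((k:ℝ)+4)
      = Real.sqrt (SS p m) * ∑ k ∈ Finset.range K, ((k:ℝ)+4)/2^k := by
    rw [Finset.mul_sum]
    exact Finset.sum_congr rfl (fun k _ => by ring)
  have hgle := chain_geom_le K
  have hl2 : l2norm (freq p m) = Real.sqrt (SS p m) := rfl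
  rw [hl2]
  have h10 : Real.sqrt (SS p m) * (∑ k ∈ Finset.range K, ((k:ℝ)+4)/2^k)
      ≤ Real.sqrt (SS p m) * 10 := mul_le_mul_of_nonneg_left hgle hsqrtpos.le
  calc ∫ ω, (⨆ t : Fin m, |∑ j, Z j ω * freq p ((t : ℕ) + 1) j|) ∂μ
      ≤ (∫ ω, |∑ j, Z j ω * q j| ∂μ) + ∑ k ∈ Finset.range K,
          (∫ ω, (A k).sup' (hAne k) (fun a => |∑ j, Z j ω * a j|) ∂μ) := hmain
    _ ≤ 3 * Real.sqrt (SS p m) + Real.sqrt (SS p m) * 10 := by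
        rw [hgeom] at hsum
        linarith
    _ ≤ 13 * Real.sqrt (SS p m) := by linarith
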